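/- Let μ ∈ P be a weight with ⟨μ,α^∨⟩ ≥ −1 for all α ∈ Φ^+. Then for every dominant weight λ ∈ P_{≥0} with μ ≤ λ in root order, it holds that μ_dom ≤ λ, where μ_dom is the unique dominant element of the Weyl group orbit W(μ). -/

import Mathlib

open RealInnerProductSpace Pointwise

/-- The covector `α^∨ := 2α/⟨α,α⟩` of a vector `α`. -/
noncomputable def corootOf {V : Type*} [NormedAddCommGroup V] [InnerProductSpace ℝ V]
    (α : V) : V := (2 / ⟪α, α⟫) • α

/-- The reflection `s_α(u) := u - ⟨u,α^∨⟩α`. -/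
noncomputable def rsReflect {V : Type*} [NormedAddCommGroup V] [InnerProductSpace ℝ V]
    (α u : V) : V := u - ⟪u, corootOf α⟫ • α

/-- An irreducible crystallographic reduced root system in a Euclidean space `V`,
together with a chosen base `α_1, …, α_n` of simple roots. -/
structure RootSystemData (V : Type*) [NormedAddCommGroup V] [InnerProductSpace ℝ V]
    (n : ℕ) where
  Φ : Set V
  finite : Φ.Finite
  nonzero : ∀ α ∈ Φ, α ≠ 0
  spans : Submodule.span ℝ Φ = ⊤
  reflect_mem : ∀ α ∈ Φ, ∀ β ∈ Φ, rsReflect α β ∈ Φ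
  reduced : ∀ α ∈ Φ, (Submodule.span ℝ {α} : Set V) ∩ Φ = {α, -α}
  crystal : ∀ α ∈ Φ, ∀ β ∈ Φ, ∃ z : ℤ, ⟪β, corootOf α⟫ = (z : ℝ)
  irred : ¬∃ Φ₁ Φ₂ : Set V, Φ₁.Nonempty ∧ Φ₂.Nonempty ∧ Φ₁ ∪ Φ₂ = Φ ∧
    Disjoint Φ₁ Φ₂ ∧ ∀ α ∈ Φ₁, ∀ β ∈ Φ₂, ⟪α, β⟫ = 0
  simple : Fin n → V
  simple_mem : ∀ i, simple i ∈ Φ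
  simple_indep : LinearIndependent ℝ simple
  simple_span : Submodule.span ℝ (Set.range simple) = ⊤
  root_combo : ∀ α ∈ Φ, (∃ c : Fin n → ℕ, α = ∑ i, (c i : ℝ) • simple i) ∨
    (∃ c : Fin n → ℕ, α = -∑ i, (c i : ℝ) • simple i)

namespace RootSystemData

variable {V : Type*} [NormedAddCommGroup V] [InnerProductSpace ℝ V] {n : ℕ}

/-- The set `Φ^+` of positive roots. -/
def Pos (R : RootSystemData V n) : Set V :=
  {α | α ∈ R.Φ ∧ ∃ c : Fin n → ℕ, α = ∑ i, (c i : ℝ) • R.simple i}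

/-- The Weyl group `W`, as the subgroup of linear automorphisms of `V` generated by
the reflections `s_α`, `α ∈ Φ`. -/
def weyl (R : RootSystemData V n) : Subgroup (V ≃ₗ[ℝ] V) :=
  Subgroup.closure {w | ∃ α ∈ R.Φ, ∀ u, w u = rsReflect α u}

/-- The Weyl group orbit `W(l)`. -/
def orbit (R : RootSystemData V n) (l : V) : Set V := {v | ∃ w ∈ R.weyl, v = w l}

/-- The permutohedron `Π(l) := ConvexHull W(l)`. -/
noncomputable def perm (R : RootSystemData V n) (l : V) : Set V := convexHull ℝ (R.orbit l)

/-- The root lattice `Q := Span_ℤ(Φ)`. -/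
def rootLattice (R : RootSystemData V n) : AddSubgroup V := AddSubgroup.closure R.Φ

/-- The coset `Q + l`. -/
def latticeCoset (R : RootSystemData V n) (l : V) : Set V := {v | v - l ∈ R.rootLattice}

/-- The discrete permutohedron `Π^Q(l) := Π(l) ∩ (Q + l)`. -/
noncomputable def permQ (R : RootSystemData V n) (l : V) : Set V :=
  R.perm l ∩ R.latticeCoset l

/-- The weight lattice `P`. -/
def weights (R : RootSystemData V n) : Set V :=
  {v | ∀ α ∈ R.Φ, ∃ z : ℤ, ⟪v, corootOf α⟫ = (z : ℝ)}

/-- A vector is dominant if it pairs nonnegatively with all simple coroots. -/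
def IsDomVec (R : RootSystemData V n) (v : V) : Prop :=
  ∀ i, 0 ≤ ⟪v, corootOf (R.simple i)⟫

/-- Dominant weights, i.e. elements of `P_{≥0}`. -/
def IsDominant (R : RootSystemData V n) (l : V) : Prop :=
  l ∈ R.weights ∧ R.IsDomVec l

/-- Root order: `μ ≤ l` iff `l − μ` is a nonnegative integer combination of simple roots. -/
def rootOrderLE (R : RootSystemData V n) (μ l : V) : Prop :=
  ∃ c : Fin n → ℕ, l - μ = ∑ i, (c i : ℝ) • R.simple i

/-- Membership in `ℕ[Φ]^W`: `W`-invariance of `k : Φ → ℕ`. -/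
def IsWInvariant (R : RootSystemData V n) (k : V → ℕ) : Prop :=
  ∀ w ∈ R.weyl, ∀ α ∈ R.Φ, k (w α) = k α

/-- Short roots: minimizers of the squared length. -/
def IsShort (R : RootSystemData V n) (α : V) : Prop :=
  α ∈ R.Φ ∧ ∀ β ∈ R.Φ, ⟪α, α⟫ ≤ ⟪β, β⟫

/-- Long roots: maximizers of the squared length. -/
def IsLong (R : RootSystemData V n) (α : V) : Prop :=
  α ∈ R.Φ ∧ ∀ β ∈ R.Φ, ⟪β, β⟫ ≤ ⟪α, α⟫

/-- Simply laced: all roots have the same length. -/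
def IsSimplyLaced (R : RootSystemData V n) : Prop :=
  ∀ α ∈ R.Φ, ∀ β ∈ R.Φ, ⟪α, α⟫ = ⟪β, β⟫

/-- `k ∈ ℕ[Φ]^W` is good if `Φ` is simply laced, or else `k` vanishing on short roots
implies it vanishes on long roots. -/
def IsGood (R : RootSystemData V n) (k : V → ℕ) : Prop :=
  R.IsSimplyLaced ∨ ((∀ α, R.IsShort α → k α = 0) → ∀ α, R.IsLong α → k α = 0)

/-- The symmetric interval-firing relation: `l → l + α` whenever
`⟨l + α/2, α^∨⟩ ∈ {−k(α), …, k(α)}`. -/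
def symFire (R : RootSystemData V n) (k : V → ℕ) (l m : V) : Prop :=
  ∃ α ∈ R.Pos, m = l + α ∧ ∃ z : ℤ,
    ⟪l + (2⁻¹ : ℝ) • α, corootOf α⟫ = (z : ℝ) ∧ -(k α : ℤ) ≤ z ∧ z ≤ (k α : ℤ)

/-- `ν` is the stabilization of `μ` for the symmetric interval-firing process. -/
def symStab (R : RootSystemData V n) (k : V → ℕ) (μ ν : V) : Prop :=
  Relation.ReflTransGen (R.symFire k) μ ν ∧ ∀ ξ, ¬ R.symFire k ν ξ

/-- The length of a Weyl group element: its number of inversions. -/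
noncomputable def len (R : RootSystemData V n) (w : V ≃ₗ[ℝ] V) : ℕ :=
  {α | α ∈ R.Pos ∧ w α ∉ R.Pos}.ncard

/-- `w` is the minimal length element of `W` such that `w⁻¹(l)` is dominant
(i.e. `w = w_l`). -/
def IsMinDomRep (R : RootSystemData V n) (l : V) (w : V ≃ₗ[ℝ] V) : Prop :=
  w ∈ R.weyl ∧ R.IsDomVec (w⁻¹ l) ∧
    ∀ w' ∈ R.weyl, R.IsDomVec (w'⁻¹ l) → R.len w ≤ R.len w'

/-- The fiber `(s^sym_𝐤)⁻¹(l)`: the set of weights whose symmetric interval-firing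
stabilization is `η_𝐤(l) = l + w_l(ρ_𝐤)`.  Here `ρk` is the vector `ρ_𝐤`. -/
def symFiber (R : RootSystemData V n) (k : V → ℕ) (ρk : V) (l : V) : Set V :=
  {μ | μ ∈ R.weights ∧ ∃ w, R.IsMinDomRep l w ∧ R.symStab k μ (l + w ρk)}

/-- The symmetric Ehrhart-like count `L^sym_l(𝐤)`. -/
noncomputable def symL (R : RootSystemData V n) (k : V → ℕ) (ρk : V) (l : V) : ℕ :=
  (R.symFiber k ρk l).ncard

/-- `I^{0,1}_l := {i : ⟨l, α_i^∨⟩ ∈ {0,1}}`. -/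
def I01 (R : RootSystemData V n) (l : V) : Set (Fin n) :=
  {i | ⟪l, corootOf (R.simple i)⟫ = 0 ∨ ⟪l, corootOf (R.simple i)⟫ = 1}

/-- The parabolic subgroup `W_I`. -/
def parabolic (R : RootSystemData V n) (I : Set (Fin n)) : Subgroup (V ≃ₗ[ℝ] V) :=
  Subgroup.closure {w | ∃ i ∈ I, ∀ u, w u = rsReflect (R.simple i) u}

/-- The parabolic sub-root system `Φ_I := Φ ∩ Span_ℝ{α_i : i ∈ I}`. -/
def parabolicRoots (R : RootSystemData V n) (I : Set (Fin n)) : Set V :=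
  R.Φ ∩ (Submodule.span ℝ (R.simple '' I) : Set V)

/-- The set `W^I` of minimal length representatives of the cosets of `W_I` in `W`. -/
noncomputable def minReps (R : RootSystemData V n) (I : Set (Fin n)) : Set (V ≃ₗ[ℝ] V) :=
  {w | w ∈ R.weyl ∧ ∀ w' ∈ R.weyl, w⁻¹ * w' ∈ R.parabolic I → R.len w ≤ R.len w'}

end RootSystemData

/-- The relative volume `rVol_Λ(X)` of a finite (linearly independent) set `X` with
respect to a lattice `Λ`: the number of `Λ`-points in the half-open parallelepiped
`Σ_{x ∈ X} [0, x)` (equivalently, the gcd of the maximal minors of the matrix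
expressing the elements of `X` in a basis of `Λ`). -/
noncomputable def rVol {V : Type*} [AddCommGroup V] [Module ℝ V]
    (Λ : AddSubgroup V) (X : Finset V) : ℕ :=
  {v : V | v ∈ Λ ∧ ∃ c : V → ℝ, (∀ x ∈ X, 0 ≤ c x ∧ c x < 1) ∧
    v = ∑ x ∈ X, c x • x}.ncard

section Aux
variable {V : Type*} [NormedAddCommGroup V] [InnerProductSpace ℝ V]

lemma root_inner_self_pos {α : V} (hα : α ≠ 0) : 0 < ⟪α, α⟫ :=
  lt_of_le_of_ne real_inner_self_nonneg (Ne.symm (inner_self_ne_zero.2 hα))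

lemma coroot_self {α : V} (hα : α ≠ 0) : ⟪α, corootOf α⟫ = 2 := by
  have h : ⟪α, α⟫ ≠ 0 := (root_inner_self_pos hα).ne'
  unfold corootOf
  rw [real_inner_smul_right]
  field_simp

lemma inner_corootOf (v α : V) : ⟪v, corootOf α⟫ = 2 / ⟪α, α⟫ * ⟪v, α⟫ := by
  unfold corootOf; rw [real_inner_smul_right]

lemma corootOf_neg (α : V) : corootOf (-α) = - corootOf α := by
  unfold corootOf; simp

lemma rsReflect_neg (α u : V) : rsReflect (-α) u = rsReflect α u := by
  unfold rsReflect; rw [corootOf_neg]; simp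

lemma rsReflect_self {α : V} (hα : α ≠ 0) : rsReflect α α = -α := by
  unfold rsReflect; rw [coroot_self hα]; module

lemma rsReflect_invol (α u : V) : rsReflect α (rsReflect α u) = u := by
  rcases eq_or_ne α 0 with rfl | hα
  · unfold rsReflect corootOf; simp
  · unfold rsReflect
    rw [inner_sub_left, real_inner_smul_left, coroot_self hα]
    module

/-- The reflection as a linear map. -/
noncomputable def reflMap (α : V) : V →ₗ[ℝ] V where
  toFun u := rsReflect α u
  map_add' u v := by
    show rsReflect α (u + v) = rsReflect α u + rsReflect α v
    unfold rsReflect; rw [inner_add_left]; module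
  map_smul' t u := by
    show rsReflect α (t • u) = t • rsReflect α u
    unfold rsReflect; rw [real_inner_smul_left]; module

/-- The reflection as a linear equivalence. -/
noncomputable def sref (α : V) : V ≃ₗ[ℝ] V :=
  LinearEquiv.ofInvolutive (reflMap α) (fun u => rsReflect_invol α u)

@[simp] lemma sref_apply (α u : V) : sref α u = rsReflect α u := rfl

lemma sref_mul_self (α : V) : sref α * sref α = 1 := by
  ext u; exact rsReflect_invol α u

lemma sref_inv (α : V) : (sref α)⁻¹ = sref α :=
  inv_eq_of_mul_eq_one_right (sref_mul_self α)

lemma sref_neg (α : V) : sref (-α) = sref α := by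
  ext u; exact rsReflect_neg α u

lemma inner_rsReflect (α u v : V) : ⟪rsReflect α u, rsReflect α v⟫ = ⟪u, v⟫ := by
  rcases eq_or_ne α 0 with rfl | hα
  · unfold rsReflect corootOf; simp
  · have h : ⟪α, α⟫ ≠ 0 := (root_inner_self_pos hα).ne'
    unfold rsReflect
    rw [inner_sub_left, inner_sub_right, inner_sub_right,
      real_inner_smul_left, real_inner_smul_right, real_inner_smul_left,
      real_inner_smul_right, inner_corootOf, inner_corootOf]
    rw [real_inner_comm α v]
    field_simp
    ring

lemma corootOf_map {e : V ≃ₗ[ℝ] V} (he : ∀ a b, ⟪e a, e b⟫ = ⟪a, b⟫) (α : V) :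
    corootOf (e α) = e (corootOf α) := by
  unfold corootOf; rw [he, map_smul]

lemma sref_conj {e : V ≃ₗ[ℝ] V} (he : ∀ a b, ⟪e a, e b⟫ = ⟪a, b⟫) (α : V) :
    sref (e α) = e * sref α * e⁻¹ := by
  ext x
  show rsReflect (e α) x = e (rsReflect α (e⁻¹ x))
  unfold rsReflect
  rw [corootOf_map he, map_sub, map_smul]
  have hx : e (e⁻¹ x) = x := e.apply_symm_apply x
  have h2 := he (e⁻¹ x) (corootOf α)
  rw [hx] at h2
  rw [hx, h2]

end Aux


namespace RootSystemData
variable {V : Type*} [NormedAddCommGroup V] [InnerProductSpace ℝ V] {n : ℕ}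
  (R : RootSystemData V n)

/-- The simple roots as a basis. -/
noncomputable def basisOf : Module.Basis (Fin n) ℝ V :=
  Module.Basis.mk R.simple_indep (by rw [R.simple_span])

lemma basisOf_apply (i : Fin n) : R.basisOf i = R.simple i := Module.Basis.mk_apply _ _ i

lemma repr_combo (c : Fin n → ℝ) (j : Fin n) :
    R.basisOf.repr (∑ i, c i • R.simple i) j = c j := by
  have h : (∑ i, c i • R.simple i) = ∑ i, c i • R.basisOf i := by
    simp [R.basisOf_apply]
  rw [h]
  exact congrFun (Module.Basis.repr_sum_self _ _) j

lemma repr_comboN (c : Fin n → ℕ) (j : Fin n) :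
    R.basisOf.repr (∑ i, (c i : ℝ) • R.simple i) j = (c j : ℝ) :=
  R.repr_combo (fun k => (c k : ℝ)) j

lemma repr_simple_self (i : Fin n) : R.basisOf.repr (R.simple i) i = 1 := by
  rw [← R.basisOf_apply]; simp

lemma repr_simple_ne {i j : Fin n} (hij : i ≠ j) : R.basisOf.repr (R.simple i) j = 0 := by
  rw [← R.basisOf_apply]
  rw [Module.Basis.repr_self]
  exact Finsupp.single_eq_of_ne (Ne.symm hij)

lemma repr_sub_smul (x y : V) (t : ℝ) (j : Fin n) :
    R.basisOf.repr (x - t • y) j =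
      R.basisOf.repr x j - t * R.basisOf.repr y j := by
  rw [map_sub, map_smul]
  simp

lemma repr_neg (x : V) (j : Fin n) :
    R.basisOf.repr (-x) j = -(R.basisOf.repr x j) := by
  rw [map_neg]; simp

lemma simple_ne_zero (i : Fin n) : R.simple i ≠ 0 := R.nonzero _ (R.simple_mem i)

lemma simple_mem_pos (i : Fin n) : R.simple i ∈ R.Pos := by
  refine ⟨R.simple_mem i, fun j => if j = i then 1 else 0, ?_⟩
  rw [Finset.sum_eq_single i]
  · simp
  · intro j _ hj; simp [hj]
  · intro h; exact absurd (Finset.mem_univ i) h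

lemma neg_mem (β : V) (hβ : β ∈ R.Φ) : -β ∈ R.Φ := by
  have h := R.reflect_mem β hβ β hβ
  rwa [rsReflect_self (R.nonzero β hβ)] at h

lemma pos_or_neg {β : V} (hβ : β ∈ R.Φ) : β ∈ R.Pos ∨ -β ∈ R.Pos := by
  rcases R.root_combo β hβ with ⟨c, hc⟩ | ⟨c, hc⟩
  · exact Or.inl ⟨hβ, c, hc⟩
  · refine Or.inr ⟨R.neg_mem β hβ, c, ?_⟩
    rw [hc, neg_neg]

lemma not_pos_and_neg {β : V} (h1 : β ∈ R.Pos) (h2 : -β ∈ R.Pos) : False := by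
  obtain ⟨hβ, c, hc⟩ := h1
  obtain ⟨_, d, hd⟩ := h2
  have hall : ∀ j, (c j : ℝ) = 0 := by
    intro j
    have e1 : R.basisOf.repr β j = (c j : ℝ) := by rw [hc]; exact R.repr_comboN c j
    have e2 : R.basisOf.repr (-β) j = (d j : ℝ) := by rw [hd]; exact R.repr_comboN d j
    rw [R.repr_neg] at e2
    have hc0 : (0:ℝ) ≤ (c j : ℝ) := Nat.cast_nonneg _
    have hd0 : (0:ℝ) ≤ (d j : ℝ) := Nat.cast_nonneg _
    linarith
  apply R.nonzero β hβ
  rw [hc]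
  apply Finset.sum_eq_zero
  intro j _
  rw [hall j, zero_smul]

lemma coroot_factor_pos {α : V} (hα : α ≠ 0) : 0 < 2 / ⟪α, α⟫ :=
  div_pos two_pos (root_inner_self_pos hα)

lemma inner_simple_nonneg {v : V} (hv : R.IsDomVec v) (i : Fin n) : 0 ≤ ⟪v, R.simple i⟫ := by
  have h := hv i
  rw [inner_corootOf] at h
  exact (mul_nonneg_iff_of_pos_left (coroot_factor_pos (R.simple_ne_zero i))).1 h

lemma dom_inner_pos_root {v β : V} (hv : R.IsDomVec v) (hβ : β ∈ R.Pos) : 0 ≤ ⟪v, β⟫ := by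
  obtain ⟨_, c, hc⟩ := hβ
  rw [hc, inner_sum]
  apply Finset.sum_nonneg
  intro i _
  rw [real_inner_smul_right]
  exact mul_nonneg (Nat.cast_nonneg _) (R.inner_simple_nonneg hv i)

/-- `s_i` permutes the positive roots other than `α_i`. -/
lemma reflect_simple_pos {β : V} (i : Fin n) (hβ : β ∈ R.Pos) (hne : β ≠ R.simple i) :
    rsReflect (R.simple i) β ∈ R.Pos := by
  obtain ⟨hβΦ, c, hc⟩ := hβ
  have hγΦ : rsReflect (R.simple i) β ∈ R.Φ := R.reflect_mem _ (R.simple_mem i) β hβΦ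
  rcases R.pos_or_neg hγΦ with h | h
  · exact h
  · exfalso
    obtain ⟨_, d, hd⟩ := h
    set t : ℝ := ⟪β, corootOf (R.simple i)⟫ with ht
    have hγ : rsReflect (R.simple i) β = β - t • R.simple i := rfl
    have hrβ : ∀ j, R.basisOf.repr β j = (c j : ℝ) := by
      intro j; rw [hc]; exact R.repr_comboN c j
    have hcj : ∀ j, j ≠ i → (c j : ℝ) = 0 := by
      intro j hj
      have e1 : R.basisOf.repr (rsReflect (R.simple i) β) j = (c j : ℝ) := by
        rw [hγ, R.repr_sub_smul, R.repr_simple_ne (Ne.symm hj), mul_zero, sub_zero, hrβ]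
      have e2 : R.basisOf.repr (-(rsReflect (R.simple i) β)) j = (d j : ℝ) := by
        rw [hd]; exact R.repr_comboN d j
      rw [R.repr_neg, e1] at e2
      have hc0 : (0:ℝ) ≤ (c j : ℝ) := Nat.cast_nonneg _
      have hd0 : (0:ℝ) ≤ (d j : ℝ) := Nat.cast_nonneg _
      linarith
    have hβspan : β = (c i : ℝ) • R.simple i := by
      rw [hc, Finset.sum_eq_single i]
      · intro j _ hj; rw [hcj j hj, zero_smul]
      · intro h; exact absurd (Finset.mem_univ i) h
    have hmem : β ∈ (Submodule.span ℝ {R.simple i} : Set V) ∩ R.Φ := by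
      constructor
      · rw [hβspan]
        exact Submodule.smul_mem _ _ (Submodule.mem_span_singleton_self _)
      · exact hβΦ
    rw [R.reduced _ (R.simple_mem i)] at hmem
    rcases hmem with h' | h'
    · exact hne h'
    · simp only [Set.mem_singleton_iff] at h'
      have e3 : R.basisOf.repr β i = -1 := by
        rw [h', R.repr_neg, R.repr_simple_self]
      rw [hrβ] at e3
      have h0 : (0:ℝ) ≤ (c i : ℝ) := Nat.cast_nonneg _
      linarith

lemma cartan_nonpos {i j : Fin n} (hij : j ≠ i) :
    ⟪R.simple j, corootOf (R.simple i)⟫ ≤ 0 := by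
  by_contra h
  push_neg at h
  set t : ℝ := ⟪R.simple j, corootOf (R.simple i)⟫ with ht
  have hγΦ : rsReflect (R.simple i) (R.simple j) ∈ R.Φ :=
    R.reflect_mem _ (R.simple_mem i) _ (R.simple_mem j)
  have hγ : rsReflect (R.simple i) (R.simple j) = R.simple j - t • R.simple i := rfl
  rcases R.pos_or_neg hγΦ with hp | hp
  · obtain ⟨_, c, hc⟩ := hp
    have e1 : R.basisOf.repr (rsReflect (R.simple i) (R.simple j)) i = (c i : ℝ) := by
      rw [hc]; exact R.repr_comboN c i
    rw [hγ, R.repr_sub_smul, R.repr_simple_ne hij, R.repr_simple_self, mul_one, zero_sub] at e1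
    have h0 : (0:ℝ) ≤ (c i : ℝ) := Nat.cast_nonneg _
    linarith
  · obtain ⟨_, d, hd⟩ := hp
    have e1 : R.basisOf.repr (-(rsReflect (R.simple i) (R.simple j))) j = (d j : ℝ) := by
      rw [hd]; exact R.repr_comboN d j
    rw [R.repr_neg, hγ, R.repr_sub_smul, R.repr_simple_self,
      R.repr_simple_ne (Ne.symm hij), mul_zero, sub_zero] at e1
    have h0 : (0:ℝ) ≤ (d j : ℝ) := Nat.cast_nonneg _
    linarith

end RootSystemData


namespace RootSystemData
variable {V : Type*} [NormedAddCommGroup V] [InnerProductSpace ℝ V] {n : ℕ}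
  (R : RootSystemData V n)

/-- The product of simple reflections along a word. -/
noncomputable def wprod (L : List (Fin n)) : V ≃ₗ[ℝ] V :=
  (L.map (fun i => sref (R.simple i))).prod

lemma wprod_nil : R.wprod [] = 1 := rfl

lemma wprod_cons (k : Fin n) (L : List (Fin n)) :
    R.wprod (k :: L) = sref (R.simple k) * R.wprod L := by
  unfold wprod; rw [List.map_cons, List.prod_cons]

lemma wprod_append (L1 L2 : List (Fin n)) :
    R.wprod (L1 ++ L2) = R.wprod L1 * R.wprod L2 := by
  unfold wprod; rw [List.map_append, List.prod_append]

lemma wprod_singleton (i : Fin n) : R.wprod [i] = sref (R.simple i) := by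
  rw [R.wprod_cons, wprod_nil, mul_one]

lemma wprod_inner (L : List (Fin n)) (u v : V) :
    ⟪R.wprod L u, R.wprod L v⟫ = ⟪u, v⟫ := by
  induction L with
  | nil => rfl
  | cons k L IH =>
    rw [R.wprod_cons]
    have h1 : (sref (R.simple k) * R.wprod L) u = sref (R.simple k) (R.wprod L u) := rfl
    have h2 : (sref (R.simple k) * R.wprod L) v = sref (R.simple k) (R.wprod L v) := rfl
    rw [h1, h2, sref_apply, sref_apply, inner_rsReflect, IH]

lemma wprod_root (L : List (Fin n)) {β : V} (hβ : β ∈ R.Φ) : R.wprod L β ∈ R.Φ := by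
  induction L with
  | nil => exact hβ
  | cons k L IH =>
    rw [R.wprod_cons]
    have h1 : (sref (R.simple k) * R.wprod L) β = sref (R.simple k) (R.wprod L β) := rfl
    rw [h1, sref_apply]
    exact R.reflect_mem _ (R.simple_mem k) _ IH

lemma sref_mem_weyl {α : V} (hα : α ∈ R.Φ) : sref α ∈ R.weyl :=
  Subgroup.subset_closure ⟨α, hα, fun u => rfl⟩

lemma wprod_mem_weyl (L : List (Fin n)) : R.wprod L ∈ R.weyl := by
  induction L with
  | nil => exact one_mem _
  | cons k L IH =>
    rw [R.wprod_cons]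
    exact mul_mem (R.sref_mem_weyl (R.simple_mem k)) IH

lemma wprod_reverse (L : List (Fin n)) : R.wprod L.reverse = (R.wprod L)⁻¹ := by
  induction L with
  | nil => simp [wprod_nil]
  | cons k L IH =>
    rw [List.reverse_cons, R.wprod_append, R.wprod_singleton, IH, R.wprod_cons,
      mul_inv_rev, sref_inv]

/-- Reflections at positive roots are products of simple reflections
(by induction on height). -/
lemma refl_word_aux : ∀ m : ℕ, ∀ β ∈ R.Φ, ∀ c : Fin n → ℕ,
    β = ∑ i, (c i : ℝ) • R.simple i → (∑ i, c i) = m →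
    ∃ L, sref β = R.wprod L := by
  intro m
  induction m using Nat.strong_induction_on with
  | _ m IH =>
  intro β hβ c hc hm
  have hβ0 : β ≠ 0 := R.nonzero β hβ
  have hpos : (0:ℝ) < ⟪β, β⟫ := root_inner_self_pos hβ0
  have hsum : ⟪β, β⟫ = ∑ i, (c i : ℝ) * ⟪R.simple i, β⟫ := by
    nth_rewrite 1 [hc]
    rw [sum_inner]
    congr 1; funext i
    rw [real_inner_smul_left]
  have hex : ∃ i, 0 < (c i : ℝ) * ⟪R.simple i, β⟫ := by
    by_contra hno
    push_neg at hno
    have hs := Finset.sum_nonpos (s := Finset.univ)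
      (f := fun i => (c i : ℝ) * ⟪R.simple i, β⟫) (fun i _ => hno i)
    rw [hsum] at hpos
    linarith
  obtain ⟨i, hi⟩ := hex
  have hiβ : 0 < ⟪R.simple i, β⟫ := by
    rcases le_or_gt ⟪R.simple i, β⟫ 0 with hle | hlt
    · nlinarith [(Nat.cast_nonneg (c i) : (0:ℝ) ≤ (c i : ℝ))]
    · exact hlt
  by_cases hβi : β = R.simple i
  · exact ⟨[i], by rw [R.wprod_singleton, hβi]⟩
  · -- reflect down
    obtain ⟨z, hz⟩ := R.crystal _ (R.simple_mem i) β hβ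
    set t : ℝ := ⟪β, corootOf (R.simple i)⟫ with htdef
    have htpos : 0 < t := by
      rw [htdef, inner_corootOf, real_inner_comm (R.simple i) β]
      exact mul_pos (coroot_factor_pos (R.simple_ne_zero i)) hiβ
    have hz0 : 0 < z := by
      have := htpos
      rw [hz] at this
      exact_mod_cast this
    have hz1 : (1:ℝ) ≤ t := by
      rw [hz]
      exact_mod_cast hz0
    have hγpos : rsReflect (R.simple i) β ∈ R.Pos :=
      R.reflect_simple_pos i ⟨hβ, c, hc⟩ hβi
    obtain ⟨hγΦ, c', hc'⟩ := hγpos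
    have hγ : rsReflect (R.simple i) β = β - t • R.simple i := rfl
    have hrβ : ∀ j, R.basisOf.repr β j = (c j : ℝ) := by
      intro j; rw [hc]; exact R.repr_comboN c j
    have hcoord : ∀ j, (c' j : ℝ) = (c j : ℝ) - t * R.basisOf.repr (R.simple i) j := by
      intro j
      have e1 : R.basisOf.repr (rsReflect (R.simple i) β) j = (c' j : ℝ) := by
        rw [hc']; exact R.repr_comboN c' j
      rw [hγ, R.repr_sub_smul, hrβ] at e1
      linarith [e1]
    have hsumrepr : ∑ j, R.basisOf.repr (R.simple i) j = 1 := by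
      rw [Finset.sum_eq_single i]
      · exact R.repr_simple_self i
      · intro j _ hj; exact R.repr_simple_ne (Ne.symm hj)
      · intro h; exact absurd (Finset.mem_univ i) h
    have hsum' : ((∑ j, c' j : ℕ) : ℝ) = (m : ℝ) - t := by
      push_cast
      rw [Finset.sum_congr rfl (fun j _ => hcoord j)]
      rw [Finset.sum_sub_distrib, ← Finset.mul_sum, hsumrepr, mul_one]
      have hmr : (∑ j, ((c j : ℕ) : ℝ)) = (m : ℝ) := by exact_mod_cast hm
      rw [hmr]
    have hlt : (∑ j, c' j) < m := by
      have : ((∑ j, c' j : ℕ) : ℝ) < (m : ℝ) := by rw [hsum']; linarith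
      exact_mod_cast this
    obtain ⟨L₀, hL₀⟩ := IH _ hlt _ hγΦ c' hc' rfl
    refine ⟨i :: (L₀ ++ [i]), ?_⟩
    have hββ : β = sref (R.simple i) (rsReflect (R.simple i) β) := by
      rw [sref_apply, rsReflect_invol]
    rw [R.wprod_cons, R.wprod_append, R.wprod_singleton, ← hL₀]
    nth_rewrite 1 [hββ]
    rw [sref_conj (fun a b => inner_rsReflect (R.simple i) a b), sref_inv]
    rw [mul_assoc]

lemma sref_word {β : V} (hβ : β ∈ R.Φ) : ∃ L, sref β = R.wprod L := by
  rcases R.pos_or_neg hβ with ⟨hΦ, c, hc⟩ | ⟨hΦ, c, hc⟩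
  · exact R.refl_word_aux _ β hΦ c hc rfl
  · obtain ⟨L, hL⟩ := R.refl_word_aux _ (-β) hΦ c hc rfl
    refine ⟨L, ?_⟩
    rw [← hL]
    exact (sref_neg β).symm

lemma weyl_word {w : V ≃ₗ[ℝ] V} (hw : w ∈ R.weyl) : ∃ L, w = R.wprod L := by
  induction hw using Subgroup.closure_induction with
  | mem x hx =>
    obtain ⟨α, hα, hfun⟩ := hx
    have hxe : x = sref α := by
      apply LinearEquiv.ext; intro u; rw [hfun u, sref_apply]
    rw [hxe]; exact R.sref_word hα
  | one => exact ⟨[], rfl⟩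
  | mul x y _ _ hx hy =>
    obtain ⟨L1, rfl⟩ := hx
    obtain ⟨L2, rfl⟩ := hy
    exact ⟨L1 ++ L2, (R.wprod_append L1 L2).symm⟩
  | inv x _ hx =>
    obtain ⟨L, rfl⟩ := hx
    exact ⟨L.reverse, (R.wprod_reverse L).symm⟩

/-- The exchange lemma. -/
lemma exchange : ∀ (L : List (Fin n)) (i : Fin n), R.wprod L (R.simple i) ∉ R.Pos →
    ∃ L', R.wprod L' = R.wprod L * sref (R.simple i) ∧ L'.length < L.length := by
  intro L
  induction L with
  | nil =>
    intro i h
    exact absurd (R.simple_mem_pos i) (by simpa [wprod_nil] using h)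
  | cons k L₀ IH =>
    intro i h
    by_cases h0 : R.wprod L₀ (R.simple i) ∈ R.Pos
    · have happ : R.wprod (k :: L₀) (R.simple i)
          = rsReflect (R.simple k) (R.wprod L₀ (R.simple i)) := by
        rw [R.wprod_cons]; rfl
      have heq : R.wprod L₀ (R.simple i) = R.simple k := by
        by_contra hne
        exact h (by rw [happ]; exact R.reflect_simple_pos k h0 hne)
      have hconj : sref (R.simple k) = R.wprod L₀ * sref (R.simple i) * (R.wprod L₀)⁻¹ := by
        rw [← heq]
        exact sref_conj (R.wprod_inner L₀) _
      refine ⟨L₀, ?_, by simp⟩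
      rw [R.wprod_cons, hconj]
      have hss := sref_mul_self (R.simple i)
      symm
      calc R.wprod L₀ * sref (R.simple i) * (R.wprod L₀)⁻¹ * R.wprod L₀ * sref (R.simple i)
          = R.wprod L₀ * sref (R.simple i) * ((R.wprod L₀)⁻¹ * R.wprod L₀) * sref (R.simple i) := by
            group
        _ = R.wprod L₀ * (sref (R.simple i) * sref (R.simple i)) := by
            rw [inv_mul_cancel]; group
        _ = R.wprod L₀ := by rw [hss, mul_one]
    · obtain ⟨L', hL', hlen⟩ := IH i h0
      refine ⟨k :: L', ?_, by simpa using Nat.succ_lt_succ hlen⟩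
      rw [R.wprod_cons, hL', R.wprod_cons, mul_assoc]

lemma fixed_of_dom_aux : ∀ (m : ℕ) (L : List (Fin n)), L.length ≤ m → ∀ v, R.IsDomVec v →
    R.IsDomVec (R.wprod L v) → R.wprod L v = v := by
  intro m
  induction m with
  | zero =>
    intro L hL v _ _
    have : L = [] := List.length_eq_zero_iff.mp (Nat.le_zero.mp hL)
    subst this; rfl
  | succ m IH =>
    intro L hL v hv hwv
    rcases List.eq_nil_or_concat L with rfl | ⟨L₀, i, rfl⟩
    · rfl
    · rw [List.concat_eq_append] at *
      have hsplit : R.wprod (L₀ ++ [i]) = R.wprod L₀ * sref (R.simple i) := by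
        rw [R.wprod_append, R.wprod_singleton]
      have hlenL : L₀.length + 1 ≤ m + 1 := by simpa using hL
      by_cases h0 : R.wprod L₀ (R.simple i) ∈ R.Pos
      · -- then ⟨v, α_i⟩ = 0
        have hwa : R.wprod (L₀ ++ [i]) (R.simple i) = -(R.wprod L₀ (R.simple i)) := by
          rw [hsplit]
          have : (R.wprod L₀ * sref (R.simple i)) (R.simple i)
              = R.wprod L₀ (sref (R.simple i) (R.simple i)) := rfl
          rw [this, sref_apply, rsReflect_self (R.simple_ne_zero i), map_neg]
        have hinner : ⟪R.wprod (L₀ ++ [i]) v, R.wprod (L₀ ++ [i]) (R.simple i)⟫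
            = ⟪v, R.simple i⟫ := R.wprod_inner _ v (R.simple i)
        have h1 : 0 ≤ ⟪v, R.simple i⟫ := R.inner_simple_nonneg hv i
        have h2 : 0 ≤ ⟪R.wprod (L₀ ++ [i]) v, R.wprod L₀ (R.simple i)⟫ :=
          R.dom_inner_pos_root hwv h0
        rw [hwa, inner_neg_right] at hinner
        have h3 : ⟪v, R.simple i⟫ = 0 := by linarith
        have hsv : sref (R.simple i) v = v := by
          rw [sref_apply]
          show v - ⟪v, corootOf (R.simple i)⟫ • R.simple i = v
          rw [inner_corootOf, h3, mul_zero, zero_smul, sub_zero]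
        have hred : R.wprod (L₀ ++ [i]) v = R.wprod L₀ v := by
          rw [hsplit]
          have : (R.wprod L₀ * sref (R.simple i)) v = R.wprod L₀ (sref (R.simple i) v) := rfl
          rw [this, hsv]
        rw [hred] at hwv ⊢
        exact IH L₀ (Nat.lt_succ_iff.mp hlenL) v hv hwv
      · obtain ⟨L', hL', hlen⟩ := R.exchange L₀ i h0
        have heq : R.wprod (L₀ ++ [i]) = R.wprod L' := by rw [hsplit, hL']
        rw [heq] at hwv ⊢
        have : L'.length ≤ m := by omega
        exact IH L' this v hv hwv

/-- A dominant vector is the unique dominant vector in its Weyl orbit. -/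
lemma dom_orbit_eq {w : V ≃ₗ[ℝ] V} (hw : w ∈ R.weyl) {v : V} (hv : R.IsDomVec v)
    (hwv : R.IsDomVec (w v)) : w v = v := by
  obtain ⟨L, rfl⟩ := R.weyl_word hw
  exact R.fixed_of_dom_aux L.length L le_rfl v hv hwv

end RootSystemData


section Aux4
variable {V : Type*} [NormedAddCommGroup V] [InnerProductSpace ℝ V]

lemma inner_reflect_coroot (α u β : V) :
    ⟪rsReflect α u, corootOf β⟫ = ⟪u, corootOf (rsReflect α β)⟫ := by
  have he : ∀ a b : V, ⟪(sref α) a, (sref α) b⟫ = ⟪a, b⟫ :=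
    fun a b => inner_rsReflect α a b
  have hβ : β = (sref α) (rsReflect α β) := by
    rw [sref_apply, rsReflect_invol]
  have h1 : corootOf β = (sref α) (corootOf (rsReflect α β)) := by
    conv_lhs => rw [hβ]
    rw [corootOf_map he]
  rw [h1]
  exact he u _

end Aux4

namespace RootSystemData
variable {V : Type*} [NormedAddCommGroup V] [InnerProductSpace ℝ V] {n : ℕ}
  (R : RootSystemData V n)

lemma main_aux (l : V) (hl : R.IsDominant l) : ∀ h : ℕ, ∀ μ, μ ∈ R.weights →
    (∀ α ∈ R.Pos, (-1:ℝ) ≤ ⟪μ, corootOf α⟫) →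
    ∀ k : Fin n → ℕ, l - μ = ∑ i, (k i : ℝ) • R.simple i → (∑ i, k i) = h →
    ∀ μd, μd ∈ R.orbit μ → R.IsDomVec μd → R.rootOrderLE μd l := by
  intro h
  induction h using Nat.strong_induction_on with
  | _ h IH =>
  intro μ hμw hge k hk hkh μd hμd hdom
  by_cases hd : R.IsDomVec μ
  · obtain ⟨w, hw, rfl⟩ := hμd
    unfold rootOrderLE
    rw [R.dom_orbit_eq hw hd hdom]
    exact ⟨k, hk⟩
  · have hex : ∃ i, ⟪μ, corootOf (R.simple i)⟫ < 0 := by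
      by_contra hno
      push_neg at hno
      exact hd (fun i => hno i)
    obtain ⟨i, hi⟩ := hex
    obtain ⟨z, hz⟩ := hμw _ (R.simple_mem i)
    have hgei := hge _ (R.simple_mem_pos i)
    have hz1 : z = -1 := by
      have h1 : (z : ℝ) < 0 := by rw [← hz]; exact hi
      have h2 : (-1 : ℝ) ≤ (z : ℝ) := by rw [← hz]; exact hgei
      have h1' : z < 0 := by exact_mod_cast h1
      have h2' : (-1 : ℤ) ≤ z := by exact_mod_cast h2
      omega
    set μ₂ := μ + R.simple i with hμ₂
    have hrefl : rsReflect (R.simple i) μ = μ₂ := by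
      show μ - ⟪μ, corootOf (R.simple i)⟫ • R.simple i = μ + R.simple i
      rw [hz, hz1]
      push_cast
      module
    -- μ₂ is a weight
    have hw2 : μ₂ ∈ R.weights := by
      intro β hβ
      rw [← hrefl, inner_reflect_coroot]
      exact hμw _ (R.reflect_mem _ (R.simple_mem i) β hβ)
    -- μ₂ satisfies the ≥ -1 condition
    have hge2 : ∀ α ∈ R.Pos, (-1:ℝ) ≤ ⟪μ₂, corootOf α⟫ := by
      intro β hβp
      rw [← hrefl, inner_reflect_coroot]
      by_cases hβi : β = R.simple i
      · subst hβi
        rw [rsReflect_self (R.simple_ne_zero i), corootOf_neg, inner_neg_right, hz, hz1]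
        norm_num
      · exact hge _ (R.reflect_simple_pos i hβp hβi)
    -- k i ≥ 1
    have hki : 1 ≤ k i := by
      by_contra hk0
      have hk0' : k i = 0 := by omega
      have hlc : 0 ≤ ⟪l, corootOf (R.simple i)⟫ := hl.2 i
      have hlk : (1:ℝ) ≤ ⟪l - μ, corootOf (R.simple i)⟫ := by
        rw [inner_sub_left, hz, hz1]
        push_cast
        linarith
      have hsum : ⟪l - μ, corootOf (R.simple i)⟫
          = ∑ j, (k j : ℝ) * ⟪R.simple j, corootOf (R.simple i)⟫ := by
        rw [hk, sum_inner]
        congr 1; funext j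
        rw [real_inner_smul_left]
      have hle0 : ⟪l - μ, corootOf (R.simple i)⟫ ≤ 0 := by
        rw [hsum]
        apply Finset.sum_nonpos
        intro j _
        by_cases hji : j = i
        · subst hji; rw [hk0']; simp
        · exact mul_nonpos_of_nonneg_of_nonpos (Nat.cast_nonneg _) (R.cartan_nonpos hji)
      linarith
    set k' := Function.update k i (k i - 1) with hk'
    have hk'cast : ∀ j, (k' j : ℝ) = (k j : ℝ) - (if j = i then 1 else 0) := by
      intro j
      by_cases hji : j = i
      · subst hji
        rw [hk', Function.update_self, if_pos rfl, Nat.cast_sub hki]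
        norm_num
      · rw [hk', Function.update_of_ne hji, if_neg hji, sub_zero]
    have hk2 : l - μ₂ = ∑ j, (k' j : ℝ) • R.simple j := by
      have hsplit : ∑ j, (k' j : ℝ) • R.simple j
          = (∑ j, (k j : ℝ) • R.simple j) - R.simple i := by
        rw [Finset.sum_congr rfl (fun j _ => by rw [hk'cast j, sub_smul])]
        rw [Finset.sum_sub_distrib]
        congr 1
        rw [Finset.sum_eq_single i]
        · rw [if_pos rfl, one_smul]
        · intro j _ hj; rw [if_neg hj, zero_smul]
        · intro hmem; exact absurd (Finset.mem_univ i) hmem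
      rw [hsplit, ← hk, hμ₂]
      abel
    have hsumk' : ∑ j, k' j < h := by
      have e1 : ∑ j, k' j = (k i - 1) + ∑ j ∈ Finset.univ.erase i, k j := by
        rw [hk', Finset.sum_update_of_mem (Finset.mem_univ i),
          Finset.sdiff_singleton_eq_erase]
      have e2 : ∑ j, k j = k i + ∑ j ∈ Finset.univ.erase i, k j :=
        (Finset.add_sum_erase _ _ (Finset.mem_univ i)).symm
      omega
    obtain ⟨w, hw, hwμ⟩ := hμd
    have hμeq : μ = (sref (R.simple i)) μ₂ := by
      rw [sref_apply, ← hrefl, rsReflect_invol]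
    have horb2 : μd ∈ R.orbit μ₂ := by
      refine ⟨w * sref (R.simple i), mul_mem hw (R.sref_mem_weyl (R.simple_mem i)), ?_⟩
      rw [hwμ, hμeq]
      rfl
    exact IH _ hsumk' μ₂ hw2 hge2 k' hk2 rfl μd horb2 hdom

end RootSystemData


/-- Proposition 2.6: if `⟨μ, α^∨⟩ ≥ −1` for all positive roots `α`,
then any dominant weight `λ ≥ μ` in root order also satisfies `λ ≥ μ_dom`. -/
theorem unique_dominant_greater {V : Type*} [NormedAddCommGroup V] [InnerProductSpace ℝ V]
    {n : ℕ} (R : RootSystemData V n) (μ : V) (hμ : μ ∈ R.weights)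
    (hge : ∀ α ∈ R.Pos, (-1 : ℝ) ≤ ⟪μ, corootOf α⟫)
    (l : V) (hl : R.IsDominant l) (hle : R.rootOrderLE μ l)
    (μdom : V) (hμdom : μdom ∈ R.orbit μ) (hdom : R.IsDomVec μdom) :
    R.rootOrderLE μdom l := by
  obtain ⟨k, hk⟩ := hle
  exact R.main_aux l hl (∑ i, k i) μ hμ hge k hk rfl μdom hμdom hdom
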